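/- For every positive integer k, there exists a polynomial g in two variables with rational coefficients such that g(0,0) = 0 and, for every natural number n, S_k(n) = g(S_1(n), S_2(n)). -/

import Mathlib

/-- `S k n = ∑_{m=1}^n m^k` as a rational number. -/
def S (k n : ℕ) : ℚ := ∑ m ∈ Finset.Icc 1 n, (m : ℚ) ^ k

open Finset

lemma S_eq_range (k n : ℕ) : S k n = ∑ i ∈ range n, ((i : ℚ) + 1) ^ k := by
  induction n with
  | zero => simp [S]
  | succ n ih =>
    unfold S at *
    rw [Finset.sum_Icc_succ_top (by omega), Finset.sum_range_succ, ih]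
    push_cast; ring

lemma S1_eq (n : ℕ) : S 1 n = n * (n + 1) / 2 := by
  induction n with
  | zero => simp [S]
  | succ n ih =>
    rw [S_eq_range, Finset.sum_range_succ, ← S_eq_range, ih]
    push_cast; ring

lemma S2_eq (n : ℕ) : S 2 n = n * (n + 1) * (2 * n + 1) / 6 := by
  induction n with
  | zero => simp [S]
  | succ n ih =>
    rw [S_eq_range, Finset.sum_range_succ, ← S_eq_range, ih]
    push_cast; ring

lemma binom_diff (j : ℕ) (y : ℚ) :
    ∑ i ∈ range (j + 1), (j.choose i : ℚ) * (1 - (-1) ^ (j - i)) * y ^ i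
      = (y + 1) ^ j - (y - 1) ^ j := by
  rw [show (y - 1 : ℚ) = y + (-1) by ring, add_pow, add_pow, ← Finset.sum_sub_distrib]
  refine Finset.sum_congr rfl fun i _ => ?_
  ring

lemma binom_sum (j : ℕ) (y : ℚ) :
    ∑ i ∈ range (j + 1), (j.choose i : ℚ) * (1 + (-1) ^ (j - i)) * y ^ i
      = (y + 1) ^ j + (y - 1) ^ j := by
  rw [show (y - 1 : ℚ) = y + (-1) by ring, add_pow, add_pow, ← Finset.sum_add_distrib]
  refine Finset.sum_congr rfl fun i _ => ?_
  ring

lemma odd_id (j n : ℕ) (hj : 1 ≤ j) :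
    ∑ i ∈ range (j + 1), (j.choose i : ℚ) * (1 - (-1) ^ (j - i)) * S (j + i) n
      = (2 * S 1 n) ^ j := by
  have h2 : (2 * S 1 n : ℚ) = (n : ℚ) * ((n : ℚ) + 1) := by rw [S1_eq]; ring
  rw [h2]
  have key : ∀ t : ℕ,
      ∑ i ∈ range (j + 1), (j.choose i : ℚ) * (1 - (-1) ^ (j - i)) * ((t : ℚ) + 1) ^ (j + i)
        = (((t : ℚ) + 1) * (((t : ℚ) + 1) + 1)) ^ j - ((t : ℚ) * ((t : ℚ) + 1)) ^ j := by
    intro t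
    have := binom_diff j ((t : ℚ) + 1)
    calc ∑ i ∈ range (j + 1), (j.choose i : ℚ) * (1 - (-1) ^ (j - i)) * ((t : ℚ) + 1) ^ (j + i)
        = ((t : ℚ) + 1) ^ j *
          ∑ i ∈ range (j + 1), (j.choose i : ℚ) * (1 - (-1) ^ (j - i)) * ((t : ℚ) + 1) ^ i := by
          rw [Finset.mul_sum]
          refine Finset.sum_congr rfl fun i _ => ?_
          rw [pow_add]; ring
      _ = ((t : ℚ) + 1) ^ j * ((((t : ℚ) + 1) + 1) ^ j - (((t : ℚ) + 1) - 1) ^ j) := by rw [this]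
      _ = _ := by rw [mul_sub, ← mul_pow, ← mul_pow]; ring_nf
  calc ∑ i ∈ range (j + 1), (j.choose i : ℚ) * (1 - (-1) ^ (j - i)) * S (j + i) n
      = ∑ i ∈ range (j + 1), ∑ t ∈ range n,
          (j.choose i : ℚ) * (1 - (-1) ^ (j - i)) * ((t : ℚ) + 1) ^ (j + i) := by
        refine Finset.sum_congr rfl fun i _ => ?_
        rw [S_eq_range, Finset.mul_sum]
    _ = ∑ t ∈ range n, ∑ i ∈ range (j + 1),
          (j.choose i : ℚ) * (1 - (-1) ^ (j - i)) * ((t : ℚ) + 1) ^ (j + i) := Finset.sum_comm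
    _ = ∑ t ∈ range n, ((fun t : ℕ => ((t : ℚ) * ((t : ℚ) + 1)) ^ j) (t + 1)
          - (fun t : ℕ => ((t : ℚ) * ((t : ℚ) + 1)) ^ j) t) := by
        refine Finset.sum_congr rfl fun t _ => ?_
        rw [key t]; push_cast; ring_nf
    _ = ((n : ℚ) * ((n : ℚ) + 1)) ^ j - ((0 : ℚ) * ((0 : ℚ) + 1)) ^ j := by
        rw [Finset.sum_range_sub (fun t : ℕ => ((t : ℚ) * ((t : ℚ) + 1)) ^ j)]
        norm_num
    _ = ((n : ℚ) * ((n : ℚ) + 1)) ^ j := by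
        rw [zero_mul, zero_pow (by omega), sub_zero]
lemma even_id (j n : ℕ) (hj : 1 ≤ j) :
    ∑ i ∈ range (j + 1), (j.choose i : ℚ) *
        (2 * (1 - (-1) ^ (j - i)) * S (j + i + 1) n + (1 + (-1) ^ (j - i)) * S (j + i) n)
      = 6 * S 2 n * (2 * S 1 n) ^ (j - 1) := by
  have h1 : (2 * S 1 n : ℚ) = (n : ℚ) * ((n : ℚ) + 1) := by rw [S1_eq]; ring
  have h2 : (6 * S 2 n : ℚ) = (n : ℚ) * ((n : ℚ) + 1) * (2 * (n : ℚ) + 1) := by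
    rw [S2_eq]; ring
  have hRHS : 6 * S 2 n * (2 * S 1 n) ^ (j - 1)
      = (2 * (n : ℚ) + 1) * ((n : ℚ) * ((n : ℚ) + 1)) ^ j := by
    rw [h1, h2]
    obtain ⟨j', rfl⟩ : ∃ j', j = j' + 1 := ⟨j - 1, by omega⟩
    simp only [Nat.add_sub_cancel, pow_succ]
    ring
  rw [hRHS]
  set F : ℕ → ℚ := fun t => (2 * (t : ℚ) + 1) * ((t : ℚ) * ((t : ℚ) + 1)) ^ j with hF
  have key : ∀ t : ℕ,
      ∑ i ∈ range (j + 1), (j.choose i : ℚ) *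
          (2 * (1 - (-1) ^ (j - i)) * ((t : ℚ) + 1) ^ (j + i + 1)
            + (1 + (-1) ^ (j - i)) * ((t : ℚ) + 1) ^ (j + i))
        = F (t + 1) - F t := by
    intro t
    set y : ℚ := (t : ℚ) + 1 with hy
    have hd := binom_diff j y
    have hs := binom_sum j y
    have lhs_eq : ∑ i ∈ range (j + 1), (j.choose i : ℚ) *
          (2 * (1 - (-1) ^ (j - i)) * y ^ (j + i + 1) + (1 + (-1) ^ (j - i)) * y ^ (j + i))
        = y ^ j * (2 * y * ((y + 1) ^ j - (y - 1) ^ j) + ((y + 1) ^ j + (y - 1) ^ j)) := by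
      calc ∑ i ∈ range (j + 1), (j.choose i : ℚ) *
            (2 * (1 - (-1) ^ (j - i)) * y ^ (j + i + 1) + (1 + (-1) ^ (j - i)) * y ^ (j + i))
          = ∑ i ∈ range (j + 1), ((y ^ j * (2 * y)) * ((j.choose i : ℚ) * (1 - (-1) ^ (j - i)) * y ^ i)
              + y ^ j * ((j.choose i : ℚ) * (1 + (-1) ^ (j - i)) * y ^ i)) := by
            refine Finset.sum_congr rfl fun i _ => ?_
            rw [pow_add, pow_add, pow_succ]
            ring
        _ = (y ^ j * (2 * y)) * ((y + 1) ^ j - (y - 1) ^ j)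
              + y ^ j * ((y + 1) ^ j + (y - 1) ^ j) := by
            rw [Finset.sum_add_distrib, ← Finset.mul_sum, ← Finset.mul_sum, hd, hs]
        _ = _ := by ring
    rw [lhs_eq, hF]
    simp only
    push_cast
    rw [show ((t : ℚ) + 1) = y from hy.symm, show (t : ℚ) = y - 1 by rw [hy]; ring]
    rw [mul_pow y (y + 1), mul_pow (y - 1) y]
    generalize (y + 1) ^ j = A
    generalize (y - 1) ^ j = B
    ring
  calc ∑ i ∈ range (j + 1), (j.choose i : ℚ) *
        (2 * (1 - (-1) ^ (j - i)) * S (j + i + 1) n + (1 + (-1) ^ (j - i)) * S (j + i) n)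
      = ∑ i ∈ range (j + 1), ∑ t ∈ range n, (j.choose i : ℚ) *
          (2 * (1 - (-1) ^ (j - i)) * ((t : ℚ) + 1) ^ (j + i + 1)
            + (1 + (-1) ^ (j - i)) * ((t : ℚ) + 1) ^ (j + i)) := by
        refine Finset.sum_congr rfl fun i _ => ?_
        rw [S_eq_range, S_eq_range]
        simp only [Finset.mul_sum]
        rw [← Finset.sum_add_distrib]
        simp only [Finset.mul_sum]
    _ = ∑ t ∈ range n, ∑ i ∈ range (j + 1), (j.choose i : ℚ) *
          (2 * (1 - (-1) ^ (j - i)) * ((t : ℚ) + 1) ^ (j + i + 1)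
            + (1 + (-1) ^ (j - i)) * ((t : ℚ) + 1) ^ (j + i)) := Finset.sum_comm
    _ = ∑ t ∈ range n, (F (t + 1) - F t) := Finset.sum_congr rfl fun t _ => key t
    _ = F n - F 0 := Finset.sum_range_sub F n
    _ = (2 * (n : ℚ) + 1) * ((n : ℚ) * ((n : ℚ) + 1)) ^ j := by
        rw [hF]; simp [zero_pow (show j ≠ 0 by omega)]
open MvPolynomial in
def Good (f : ℕ → ℚ) : Prop :=
  ∃ g : MvPolynomial (Fin 2) ℚ,
    MvPolynomial.eval (fun _ => (0 : ℚ)) g = 0 ∧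
    ∀ n : ℕ, f n = MvPolynomial.eval ![S 1 n, S 2 n] g

lemma Good.zero : Good (fun _ => 0) := ⟨0, by simp, by simp⟩

lemma goodS1 : Good (S 1) := ⟨MvPolynomial.X 0, by simp, by simp⟩

lemma goodS2 : Good (S 2) := ⟨MvPolynomial.X 1, by simp, by simp⟩

lemma Good.add {f h : ℕ → ℚ} (hf : Good f) (hh : Good h) : Good (fun n => f n + h n) := by
  obtain ⟨g1, hg1, he1⟩ := hf
  obtain ⟨g2, hg2, he2⟩ := hh
  exact ⟨g1 + g2, by rw [map_add, hg1, hg2, add_zero], fun n => by rw [map_add, ← he1 n, ← he2 n]⟩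

lemma Good.mul {f h : ℕ → ℚ} (hf : Good f) (hh : Good h) : Good (fun n => f n * h n) := by
  obtain ⟨g1, hg1, he1⟩ := hf
  obtain ⟨g2, hg2, he2⟩ := hh
  exact ⟨g1 * g2, by rw [map_mul, hg1, hg2, mul_zero], fun n => by rw [map_mul, ← he1 n, ← he2 n]⟩

lemma Good.const_mul {f : ℕ → ℚ} (c : ℚ) (hf : Good f) : Good (fun n => c * f n) := by
  obtain ⟨g1, hg1, he1⟩ := hf
  exact ⟨MvPolynomial.C c * g1, by rw [map_mul, hg1, mul_zero], fun n => by rw [map_mul, ← he1 n, MvPolynomial.eval_C]⟩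

lemma Good.sub {f h : ℕ → ℚ} (hf : Good f) (hh : Good h) : Good (fun n => f n - h n) := by
  have := hf.add ((hh.const_mul (-1)))
  simpa [sub_eq_add_neg] using this

lemma Good.congr {f h : ℕ → ℚ} (hf : Good f) (e : ∀ n, h n = f n) : Good h := by
  obtain ⟨g1, hg1, he1⟩ := hf
  exact ⟨g1, hg1, fun n => (e n).trans (he1 n)⟩

lemma Good.pow {f : ℕ → ℚ} (hf : Good f) : ∀ j : ℕ, 1 ≤ j → Good (fun n => f n ^ j) := by
  intro j
  induction j with
  | zero => omega
  | succ j ih =>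
    intro _
    rcases Nat.eq_zero_or_pos j with rfl | hj
    · exact hf.congr (fun n => by simp)
    · exact ((ih hj).mul hf).congr (fun n => by rw [pow_succ])

lemma Good.sum {ι : Type*} (s : Finset ι) (f : ι → ℕ → ℚ)
    (hf : ∀ i ∈ s, Good (f i)) : Good (fun n => ∑ i ∈ s, f i n) := by
  classical
  induction s using Finset.induction_on with
  | empty => exact Good.zero.congr (fun n => by simp)
  | insert _ _ hx ih =>
    rename_i a s'
    have h1 : Good (f a) := hf a (Finset.mem_insert_self a s')
    have h2 : Good (fun n => ∑ i ∈ s', f i n) := ih (fun i hi => hf i (Finset.mem_insert_of_mem hi))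
    exact (h1.add h2).congr (fun n => by rw [Finset.sum_insert hx])
lemma sum_range_split (f : ℕ → ℚ) (m : ℕ) :
    ∑ i ∈ range (m + 2 + 1), f i = (∑ i ∈ range (m + 1), f i) + f (m + 1) + f (m + 2) := by
  rw [Finset.sum_range_succ, Finset.sum_range_succ]

lemma good_odd (j : ℕ) (ih : ∀ m, 1 ≤ m → m < 2 * j + 3 → Good (S m)) :
    Good (S (2 * j + 3)) := by
  have hA : Good (fun n => ∑ i ∈ Finset.range (j + 1),
      ((j + 2).choose i : ℚ) * (1 - (-1) ^ (j + 2 - i)) * S (j + 2 + i) n) := by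
    apply Good.sum
    intro i hi
    have hi' : i < j + 1 := Finset.mem_range.mp hi
    exact Good.const_mul _ (ih (j + 2 + i) (by omega) (by omega))
  have h1 : Good (fun n => (2 * S 1 n) ^ (j + 2)) :=
    (goodS1.const_mul 2).pow (j + 2) (by omega)
  have hc : (j + 2).choose (j + 1) = j + 2 := Nat.choose_succ_self_right (j + 1)
  have key : ∀ n, S (2 * j + 3) n = (1 / (2 * ((j : ℚ) + 2))) * ((2 * S 1 n) ^ (j + 2)
      - ∑ i ∈ Finset.range (j + 1),
          ((j + 2).choose i : ℚ) * (1 - (-1) ^ (j + 2 - i)) * S (j + 2 + i) n) := by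
    intro n
    have hid := odd_id (j + 2) n (by omega)
    rw [sum_range_split] at hid
    rw [show j + 2 - (j + 1) = 1 by omega, show j + 2 + (j + 1) = 2 * j + 3 by omega,
      show j + 2 - (j + 2) = 0 by omega, hc] at hid
    have h2 : (2 * ((j : ℚ) + 2)) ≠ 0 := by positivity
    field_simp
    linear_combination (norm := (push_cast; ring1)) hid
  exact ((h1.sub hA).const_mul (1 / (2 * ((j : ℚ) + 2)))).congr key
lemma good_even (j : ℕ) (ih : ∀ m, 1 ≤ m → m < 2 * j + 4 → Good (S m)) :
    Good (S (2 * j + 4)) := by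
  have hA : Good (fun n => ∑ i ∈ Finset.range (j + 1),
      ((j + 2).choose i : ℚ) * (2 * (1 - (-1) ^ (j + 2 - i)) * S (j + 2 + i + 1) n
        + (1 + (-1) ^ (j + 2 - i)) * S (j + 2 + i) n)) := by
    apply Good.sum
    intro i hi
    have hi' : i < j + 1 := Finset.mem_range.mp hi
    have g1 : Good (S (j + 2 + i + 1)) := ih (j + 2 + i + 1) (by omega) (by omega)
    have g2 : Good (S (j + 2 + i)) := ih (j + 2 + i) (by omega) (by omega)
    exact Good.const_mul _ ((g1.const_mul _).add (g2.const_mul _))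
  have h1 : Good (fun n => 6 * S 2 n * (2 * S 1 n) ^ (j + 1)) :=
    (goodS2.const_mul 6).mul ((goodS1.const_mul 2).pow (j + 1) (by omega))
  have hc : (j + 2).choose (j + 1) = j + 2 := Nat.choose_succ_self_right (j + 1)
  have key : ∀ n, S (2 * j + 4) n = (1 / (4 * (j : ℚ) + 10)) *
      (6 * S 2 n * (2 * S 1 n) ^ (j + 1)
        - ∑ i ∈ Finset.range (j + 1),
            ((j + 2).choose i : ℚ) * (2 * (1 - (-1) ^ (j + 2 - i)) * S (j + 2 + i + 1) n
              + (1 + (-1) ^ (j + 2 - i)) * S (j + 2 + i) n)) := by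
    intro n
    have hid := even_id (j + 2) n (by omega)
    rw [sum_range_split] at hid
    rw [show j + 2 - (j + 1) = 1 by omega, show j + 2 - (j + 2) = 0 by omega,
      show j + 2 + (j + 1) + 1 = 2 * j + 4 by omega,
      show j + 2 + (j + 2) + 1 = 2 * j + 5 by omega,
      show j + 2 + (j + 2) = 2 * j + 4 by omega,
      show j + 2 + (j + 1) = 2 * j + 3 by omega,
      show j + 2 - 1 = j + 1 by omega, hc, Nat.choose_self] at hid
    have h2 : (4 * (j : ℚ) + 10) ≠ 0 := by positivity
    field_simp
    linear_combination (norm := (push_cast; ring1)) hid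
  exact ((h1.sub hA).const_mul (1 / (4 * (j : ℚ) + 10))).congr key
lemma good_S : ∀ k, 1 ≤ k → Good (S k) := by
  intro k
  induction k using Nat.strong_induction_on with
  | _ k ih =>
    intro hk
    match k, hk with
    | 1, _ => exact goodS1
    | 2, _ => exact goodS2
    | (m + 3), _ =>
      rcases Nat.even_or_odd m with ⟨t, ht⟩ | ⟨t, ht⟩
      · have he : m + 3 = 2 * t + 3 := by omega
        rw [he]
        exact good_odd t (fun q h1 h2 => ih q (by omega) h1)
      · have he : m + 3 = 2 * t + 4 := by omega
        rw [he]
        exact good_even t (fun q h1 h2 => ih q (by omega) h1)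

theorem power_sum_poly_of_S1_S2 (k : ℕ) (hk : 0 < k) :
    ∃ g : MvPolynomial (Fin 2) ℚ,
      MvPolynomial.eval (fun _ => (0 : ℚ)) g = 0 ∧
      ∀ n : ℕ, S k n = MvPolynomial.eval ![S 1 n, S 2 n] g := by
  exact good_S k hk
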